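/- Let ABC be a triangle with acute base angles α = ∠BAC and β = ∠ABC, and let CH be the altitude from C with H on AB, normalized so that CH = 1. Suppose equal cevians AA₁ and BB₁ intersect at a point O on line CH with signed distance y = (HO⃗ · HC⃗)/|HC⃗| ≠ 0. Then either the triangle is isosceles (cot α = cot β), or y satisfies y³ + y(cot²α + cot²β − 1) + 2 cot α cot β = 0. -/

import Mathlib

open EuclideanGeometry Real

noncomputable section

/-- The Euclidean plane. -/
abbrev Pt : Type := EuclideanSpace ℝ (Fin 2)

/-- The point of the Euclidean plane with the given coordinates. -/
def pt (x y : ℝ) : Pt := WithLp.toLp 2 ![x, y]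

private lemma cot_aux {u w : Pt} (hu : (inner ℝ u u : ℝ) = 1) (huw : (inner ℝ u w : ℝ) = 0)
    (hw : w ≠ 0) (c : ℝ) :
    Real.cot (InnerProductGeometry.angle w (u + c • w)) = c * ‖w‖ := by
  have hww : (inner ℝ w w : ℝ) = ‖w‖ ^ 2 := real_inner_self_eq_norm_sq w
  have hwu : (inner ℝ w u : ℝ) = 0 := by rw [real_inner_comm]; exact huw
  have hL : (0:ℝ) < ‖w‖ := norm_pos_iff.mpr hw
  have hip : (inner ℝ w (u + c • w) : ℝ) = c * ‖w‖ ^ 2 := by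
    simp only [inner_add_right, real_inner_smul_right, hwu, hww]; ring
  have hxx : (inner ℝ (u + c • w) (u + c • w) : ℝ) = 1 + c ^ 2 * ‖w‖ ^ 2 := by
    simp only [inner_add_left, inner_add_right, real_inner_smul_left, real_inner_smul_right,
      hu, huw, hwu, hww]; ring
  have hnx : ‖u + c • w‖ ^ 2 = 1 + c ^ 2 * ‖w‖ ^ 2 := by
    rw [← real_inner_self_eq_norm_sq (u + c • w)]; exact hxx
  have hN : (0:ℝ) < ‖u + c • w‖ := by
    rcases (norm_nonneg (u + c • w)).lt_or_eq with h | h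
    · exact h
    · exfalso; nlinarith [sq_nonneg (c * ‖w‖)]
  have hsin : Real.sin (InnerProductGeometry.angle w (u + c • w)) * (‖w‖ * ‖u + c • w‖)
      = ‖w‖ := by
    rw [InnerProductGeometry.sin_angle_mul_norm_mul_norm, hip, hww, hxx,
      show ‖w‖ ^ 2 * (1 + c ^ 2 * ‖w‖ ^ 2) - c * ‖w‖ ^ 2 * (c * ‖w‖ ^ 2) = ‖w‖ ^ 2 by ring]
    exact Real.sqrt_sq hL.le
  have hsin' : Real.sin (InnerProductGeometry.angle w (u + c • w))
      = ‖w‖ / (‖w‖ * ‖u + c • w‖) := eq_div_of_mul_eq (by positivity) hsin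
  rw [Real.cot_eq_cos_div_sin, InnerProductGeometry.cos_angle, hip, hsin']
  field_simp

/-- Let `ABC` have acute base angles `α = ∠BAC`, `β = ∠ABC` and altitude `CH` with
`CH = 1`. If equal cevians `AA₁`, `BB₁` meet at a point `O` on line `CH` with signed
coordinate `y ≠ 0` along `HC`, then either `cot α = cot β` (the triangle is
isosceles) or `y³ + y(cot²α + cot²β − 1) + 2 cot α cot β = 0`. -/
theorem cevians_on_altitude (A B C H O A₁ B₁ : Pt) (α β y : ℝ)
    (hABC : AffineIndependent ℝ ![A, B, C])
    (hadef : α = ∠ B A C) (hbdef : β = ∠ A B C)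
    (hα : α < π / 2) (hβ : β < π / 2)
    (hH : H ∈ affineSpan ℝ ({A, B} : Set Pt))
    (hCH : (inner ℝ (C -ᵥ H) (B -ᵥ A) : ℝ) = 0)
    (hCH1 : dist C H = 1)
    (hO : O ∈ affineSpan ℝ ({C, H} : Set Pt))
    (hy : y = (inner ℝ (O -ᵥ H) (C -ᵥ H) : ℝ) / ‖C -ᵥ H‖)
    (hy0 : y ≠ 0)
    (hA₁ : A₁ ∈ affineSpan ℝ ({B, C} : Set Pt)) (hA₁B : A₁ ≠ B) (hA₁C : A₁ ≠ C)
    (hB₁ : B₁ ∈ affineSpan ℝ ({A, C} : Set Pt)) (hB₁A : B₁ ≠ A) (hB₁C : B₁ ≠ C)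
    (hO₁ : O ∈ segment ℝ A A₁) (hO₂ : O ∈ segment ℝ B B₁)
    (hlen : dist A A₁ = dist B B₁) :
    Real.cot α = Real.cot β ∨
      y ^ 3 + y * (Real.cot α ^ 2 + Real.cot β ^ 2 - 1)
        + 2 * Real.cot α * Real.cot β = 0 := by
  simp only [vsub_eq_sub] at hCH hy
  have hAB : A ≠ B := by
    have := hABC.injective.ne (show (0 : Fin 3) ≠ 1 by decide)
    simpa using this
  set u : Pt := C - H with hudef
  set w : Pt := B - A with hwdef
  have hw0 : w ≠ 0 := sub_ne_zero.mpr hAB.symm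
  have hL : (0:ℝ) < ‖w‖ := norm_pos_iff.mpr hw0
  have hww : (inner ℝ w w : ℝ) = ‖w‖ ^ 2 := real_inner_self_eq_norm_sq w
  have hnu : ‖u‖ = 1 := by rw [hudef, ← dist_eq_norm]; exact hCH1
  have hu1 : (inner ℝ u u : ℝ) = 1 := by
    rw [real_inner_self_eq_norm_sq u, hnu]; norm_num
  have huw : (inner ℝ u w : ℝ) = 0 := hCH
  have hwu : (inner ℝ w u : ℝ) = 0 := by rw [real_inner_comm]; exact huw
  have hW0 : (‖w‖:ℝ) ^ 2 ≠ 0 := pow_ne_zero 2 hL.ne'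
  -- decompose H
  obtain ⟨t, ht0⟩ : ∃ t : ℝ, t • w = H - A := by
    have := (vadd_left_mem_affineSpan_pair (k := ℝ) (p₁ := A) (p₂ := B) (v := H - A)).mp
    simp only [vsub_eq_sub, vadd_eq_add, sub_add_cancel] at this
    exact this hH
  have hH' : H = t • w + A := by rw [ht0]; abel
  have hB' : B = w + A := by rw [hwdef]; abel
  have hC' : C = u + t • w + A := by rw [hudef, hH']; abel
  -- decompose O
  obtain ⟨r, hr0⟩ : ∃ r : ℝ, r • (H - C) = O - C := by
    have := (vadd_left_mem_affineSpan_pair (k := ℝ) (p₁ := C) (p₂ := H) (v := O - C)).mp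
    simp only [vsub_eq_sub, vadd_eq_add, sub_add_cancel] at this
    exact this hO
  have hOH : O - H = (1 - r) • u := by
    rw [show O - H = (O - C) + (C - H) from by abel, ← hr0, hudef]
    module
  rw [hOH, hnu, div_one, real_inner_smul_left, hu1, mul_one] at hy
  have hO' : O = y • u + t • w + A := by
    have h1 : O = (1 - r) • u + H := by rw [← hOH]; abel
    rw [h1, hH', ← hy]; abel
  -- decompose A₁, B₁
  obtain ⟨s₀, hs₀0⟩ : ∃ s : ℝ, s • (C - B) = A₁ - B := by
    have := (vadd_left_mem_affineSpan_pair (k := ℝ) (p₁ := B) (p₂ := C) (v := A₁ - B)).mp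
    simp only [vsub_eq_sub, vadd_eq_add, sub_add_cancel] at this
    exact this hA₁
  obtain ⟨s₁, hs₁0⟩ : ∃ s : ℝ, s • (C - A) = B₁ - A := by
    have := (vadd_left_mem_affineSpan_pair (k := ℝ) (p₁ := A) (p₂ := C) (v := B₁ - A)).mp
    simp only [vsub_eq_sub, vadd_eq_add, sub_add_cancel] at this
    exact this hB₁
  have hA₁' : A₁ = s₀ • u + (1 + s₀ * (t - 1)) • w + A := by
    have h1 : A₁ = s₀ • (C - B) + B := by rw [hs₀0]; abel
    rw [h1, hC', hB']; module
  have hB₁' : B₁ = s₁ • u + (s₁ * t) • w + A := by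
    have h1 : B₁ = s₁ • (C - A) + A := by rw [hs₁0]; abel
    rw [h1, hC']; module
  -- segment conditions
  rw [segment_eq_image'] at hO₁ hO₂
  obtain ⟨k, -, hk⟩ := hO₁
  obtain ⟨k', -, hk'⟩ := hO₂
  have hd₁ : (y - k * s₀) • u + (t - k * (1 + s₀ * (t - 1))) • w = 0 := by
    have hk2 : A + k • (A₁ - A) = O := hk
    have e2 : (y • u + t • w + A) - (A + k • (A₁ - A)) = 0 := by
      rw [hk2, ← hO']; abel
    calc (y - k * s₀) • u + (t - k * (1 + s₀ * (t - 1))) • w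
        = (y • u + t • w + A)
          - (A + k • ((s₀ • u + (1 + s₀ * (t - 1)) • w + A) - A)) := by module
      _ = 0 := by rw [← hA₁']; exact e2
  have hd₂ : (y - k' * s₁) • u + ((t - 1) - k' * (s₁ * t - 1)) • w = 0 := by
    have hk2 : B + k' • (B₁ - B) = O := hk'
    have e2 : (y • u + t • w + A) - (B + k' • (B₁ - B)) = 0 := by
      rw [hk2, ← hO']; abel
    calc (y - k' * s₁) • u + ((t - 1) - k' * (s₁ * t - 1)) • w
        = (y • u + t • w + A)
          - ((w + A) + k' • ((s₁ • u + (s₁ * t) • w + A) - (w + A))) := by module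
      _ = 0 := by rw [← hB₁', ← hB']; exact e2
  -- extract scalar equations
  have e1 : y = k * s₀ := by
    have h := congrArg (fun v : Pt => (inner ℝ v u : ℝ)) hd₁
    simp only [inner_add_left, real_inner_smul_left, hu1, hwu, inner_zero_left, mul_one,
      mul_zero, add_zero] at h
    exact sub_eq_zero.mp h
  have e2 : t = k * (1 + s₀ * (t - 1)) := by
    have h := congrArg (fun v : Pt => (inner ℝ v w : ℝ)) hd₁
    simp only [inner_add_left, real_inner_smul_left, huw, hww, inner_zero_left, mul_zero,
      zero_add] at h
    exact sub_eq_zero.mp ((mul_eq_zero.mp h).resolve_right hW0)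
  have e3 : y = k' * s₁ := by
    have h := congrArg (fun v : Pt => (inner ℝ v u : ℝ)) hd₂
    simp only [inner_add_left, real_inner_smul_left, hu1, hwu, inner_zero_left, mul_one,
      mul_zero, add_zero] at h
    exact sub_eq_zero.mp h
  have e4 : t - 1 = k' * (s₁ * t - 1) := by
    have h := congrArg (fun v : Pt => (inner ℝ v w : ℝ)) hd₂
    simp only [inner_add_left, real_inner_smul_left, huw, hww, inner_zero_left, mul_zero,
      zero_add] at h
    exact sub_eq_zero.mp ((mul_eq_zero.mp h).resolve_right hW0)
  -- equal lengths
  have v1 : A - A₁ = (-s₀) • u + (-(1 + s₀ * (t - 1))) • w := by rw [hA₁']; module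
  have v2 : B - B₁ = (-s₁) • u + (1 - s₁ * t) • w := by rw [hB₁', hB']; module
  have hn1 : dist A A₁ ^ 2 = (1 + s₀ * (t - 1)) ^ 2 * ‖w‖ ^ 2 + s₀ ^ 2 := by
    rw [dist_eq_norm, ← real_inner_self_eq_norm_sq (A - A₁), v1]
    simp only [inner_add_left, inner_add_right, real_inner_smul_left, real_inner_smul_right,
      hu1, huw, hwu, hww]
    ring
  have hn2 : dist B B₁ ^ 2 = (1 - s₁ * t) ^ 2 * ‖w‖ ^ 2 + s₁ ^ 2 := by
    rw [dist_eq_norm, ← real_inner_self_eq_norm_sq (B - B₁), v2]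
    simp only [inner_add_left, inner_add_right, real_inner_smul_left, real_inner_smul_right,
      hu1, huw, hwu, hww]
    ring
  have f5 : (1 + s₀ * (t - 1)) ^ 2 * ‖w‖ ^ 2 + s₀ ^ 2
      = (1 - s₁ * t) ^ 2 * ‖w‖ ^ 2 + s₁ ^ 2 := by
    rw [← hn1, ← hn2, hlen]
  -- cotangents
  have hcota : Real.cot α = t * ‖w‖ := by
    have h1 : α = InnerProductGeometry.angle w (u + t • w) := by
      rw [hadef, show (∠ B A C) = InnerProductGeometry.angle w (C - A) from rfl,
        show C - A = u + t • w from by rw [hC']; abel]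
    rw [h1]; exact cot_aux hu1 huw hw0 t
  have hcotb : Real.cot β = (1 - t) * ‖w‖ := by
    have h1 : β = InnerProductGeometry.angle (-w) (u + (1 - t) • (-w)) := by
      rw [hbdef, show (∠ A B C) = InnerProductGeometry.angle (A - B) (C - B) from rfl]
      congr 1
      · rw [hwdef]; abel
      · rw [hC', hB']; module
    have h2 := cot_aux (u := u) (w := -w) hu1
      (by rw [inner_neg_right, huw, neg_zero]) (neg_ne_zero.mpr hw0) (1 - t)
    rw [h1, h2, norm_neg]
  -- final algebra
  rw [hcota, hcotb]
  have hs0 : s₀ ≠ 0 := by intro h; rw [h, mul_zero] at e1; exact hy0 e1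
  have hs1 : s₁ ≠ 0 := by intro h; rw [h, mul_zero] at e3; exact hy0 e3
  have g1 : t * s₀ = y * (1 + s₀ * (t - 1)) := by
    linear_combination s₀ * e2 - (1 + s₀ * (t - 1)) * e1
  have g2 : (t - 1) * s₁ = y * (s₁ * t - 1) := by
    linear_combination s₁ * e4 - (s₁ * t - 1) * e3
  by_cases hab : t * ‖w‖ = (1 - t) * ‖w‖
  · exact Or.inl hab
  · right
    have hm0 : s₀ * (t * ‖w‖ + y * ((1 - t) * ‖w‖)) = y * ‖w‖ := by
      linear_combination ‖w‖ * g1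
    have hm1 : s₁ * ((1 - t) * ‖w‖ + y * (t * ‖w‖)) = y * ‖w‖ := by
      linear_combination (-‖w‖) * g2
    have f6 : s₀ ^ 2 * ((t * ‖w‖) ^ 2 + y ^ 2) = s₁ ^ 2 * (((1 - t) * ‖w‖) ^ 2 + y ^ 2) := by
      linear_combination y ^ 2 * f5
        + (s₀ * (t * ‖w‖) + y * (‖w‖ - s₀ * ((1 - t) * ‖w‖))) * hm0
        - (s₁ * ((1 - t) * ‖w‖) + y * (‖w‖ - s₁ * (t * ‖w‖))) * hm1
    have pol : ((t * ‖w‖ - (1 - t) * ‖w‖) * (‖w‖ * (y * (s₀ ^ 2 * s₁ ^ 2))))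
        * (y ^ 3 + y * ((t * ‖w‖) ^ 2 + ((1 - t) * ‖w‖) ^ 2 - 1)
          + 2 * (t * ‖w‖) * ((1 - t) * ‖w‖)) = 0 := by
      linear_combination
        (((t * ‖w‖) ^ 2 + y ^ 2) * s₀ ^ 2
          * (s₁ * ((1 - t) * ‖w‖ + y * (t * ‖w‖)) + y * ‖w‖)) * hm1
        - ((((1 - t) * ‖w‖) ^ 2 + y ^ 2) * s₁ ^ 2
          * (s₀ * (t * ‖w‖ + y * ((1 - t) * ‖w‖)) + y * ‖w‖)) * hm0
        + (y * ‖w‖) ^ 2 * f6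
    have hc : ((t * ‖w‖ - (1 - t) * ‖w‖) * (‖w‖ * (y * (s₀ ^ 2 * s₁ ^ 2)))) ≠ 0 :=
      mul_ne_zero (sub_ne_zero.mpr hab)
        (mul_ne_zero hL.ne' (mul_ne_zero hy0
          (mul_ne_zero (pow_ne_zero 2 hs0) (pow_ne_zero 2 hs1))))
    exact (mul_eq_zero.mp pol).resolve_left hc
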